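/- Let X be a nonempty compact metric space and μ a finite Borel measure on X with full support (μ(U) > 0 for every nonempty open U ⊆ X). Let u, w : X → ℝ be continuous with min u = 0, max u = l > 0 and min w = 0. For t ∈ [0,1] set h_t := min(t·l, u) + w and g(t) := ∫_X normalize(h_t) dμ. Then for every t ∈ (0,1), g(t) < max(g(0), g(1)), i.e. ∫_X normalize(min(t·l,u)+w) dμ < max(∫_X normalize(w) dμ, ∫_X normalize(u+w) dμ). -/
import Mathlib


open MeasureTheory Set

/-- The (attained) minimum of `f` on a nonempty compact space. -/
noncomputable def minF {X : Type*} (f : X → ℝ) : ℝ := sInf (Set.range f)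

/-- The (attained) maximum of `f` on a nonempty compact space. -/
noncomputable def maxF {X : Type*} (f : X → ℝ) : ℝ := sSup (Set.range f)

/-- The oscillation `max f - min f`. -/
noncomputable def oscF {X : Type*} (f : X → ℝ) : ℝ := maxF f - minF f

/-- `normalize f = f - min f`. -/
noncomputable def normF {X : Type*} (f : X → ℝ) : X → ℝ := fun x => f x - minF f

/-- The minimizer set of `f`. -/
def argminF {X : Type*} (f : X → ℝ) : Set X := {x | f x = minF f}

/-- The maximizer set of `f`. -/
def argmaxF {X : Type*} (f : X → ℝ) : Set X := {x | f x = maxF f}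

lemma exists_minF {X : Type*} [TopologicalSpace X] [CompactSpace X] [Nonempty X]
    {f : X → ℝ} (hf : Continuous f) : ∃ x0, minF f = f x0 ∧ ∀ y, f x0 ≤ f y := by
  obtain ⟨x0, -, hx0⟩ := isCompact_univ.exists_isMinOn univ_nonempty hf.continuousOn
  have hle : ∀ y, f x0 ≤ f y := fun y => hx0 (mem_univ y)
  exact ⟨x0, IsLeast.csInf_eq ⟨mem_range_self x0, by rintro _ ⟨y, rfl⟩; exact hle y⟩, hle⟩

lemma exists_maxF {X : Type*} [TopologicalSpace X] [CompactSpace X] [Nonempty X]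
    {f : X → ℝ} (hf : Continuous f) : ∃ x0, maxF f = f x0 ∧ ∀ y, f y ≤ f x0 := by
  obtain ⟨x0, -, hx0⟩ := isCompact_univ.exists_isMaxOn univ_nonempty hf.continuousOn
  have hle : ∀ y, f y ≤ f x0 := fun y => hx0 (mem_univ y)
  exact ⟨x0, IsGreatest.csSup_eq ⟨mem_range_self x0, by rintro _ ⟨y, rfl⟩; exact hle y⟩, hle⟩

lemma minF_le' {X : Type*} [TopologicalSpace X] [CompactSpace X] [Nonempty X]
    {f : X → ℝ} (hf : Continuous f) (x : X) : minF f ≤ f x := by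
  obtain ⟨x0, h0, hle⟩ := exists_minF hf
  rw [h0]; exact hle x

lemma le_maxF' {X : Type*} [TopologicalSpace X] [CompactSpace X] [Nonempty X]
    {f : X → ℝ} (hf : Continuous f) (x : X) : f x ≤ maxF f := by
  obtain ⟨x0, h0, hle⟩ := exists_maxF hf
  rw [h0]; exact hle x

lemma minF_eq_of {X : Type*} {f : X → ℝ} {c : ℝ} (h1 : ∀ x, c ≤ f x)
    (h2 : ∃ x, f x = c) : minF f = c := by
  obtain ⟨x, hx⟩ := h2
  exact IsLeast.csInf_eq ⟨⟨x, hx⟩, by rintro _ ⟨y, rfl⟩; exact h1 y⟩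

lemma cont_integrable' {X : Type*} [MetricSpace X] [CompactSpace X]
    [MeasurableSpace X] [BorelSpace X] (μ : Measure X) [IsFiniteMeasure μ]
    {f : X → ℝ} (hf : Continuous f) : Integrable f μ :=
  hf.integrable_of_hasCompactSupport (isClosed_tsupport f).isCompact

lemma integral_pos_of_full {X : Type*} [MetricSpace X] [CompactSpace X]
    [MeasurableSpace X] [BorelSpace X] (μ : Measure X) [IsFiniteMeasure μ]
    (hfull : ∀ U : Set X, IsOpen U → U.Nonempty → 0 < μ U)
    {D : X → ℝ} (hD : Continuous D) (h0 : ∀ x, 0 ≤ D x) {x0 : X} (hx0 : 0 < D x0) :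
    0 < ∫ x, D x ∂μ := by
  refine (integral_pos_iff_support_of_nonneg h0 (cont_integrable' μ hD)).2 ?_
  have hUo : IsOpen {x | 0 < D x} := isOpen_lt continuous_const hD
  exact lt_of_lt_of_le (hfull _ hUo ⟨x0, hx0⟩)
    (measure_mono fun x hx => ne_of_gt hx)

theorem stmt_8 {X : Type*} [MetricSpace X] [CompactSpace X] [Nonempty X]
    [MeasurableSpace X] [BorelSpace X]
    (μ : Measure X) [IsFiniteMeasure μ]
    (hfull : ∀ U : Set X, IsOpen U → U.Nonempty → 0 < μ U)
    (u w : X → ℝ) (hu : Continuous u) (hw : Continuous w)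
    (l : ℝ) (hl : 0 < l) (humin : minF u = 0) (humax : maxF u = l)
    (hwmin : minF w = 0) :
    ∀ t ∈ Set.Ioo (0:ℝ) 1,
      (∫ x, normF (fun x => min (t * l) (u x) + w x) x ∂μ) <
        max (∫ x, normF (fun x => min ((0:ℝ) * l) (u x) + w x) x ∂μ)
            (∫ x, normF (fun x => min ((1:ℝ) * l) (u x) + w x) x ∂μ) ∧
      (∫ x, normF (fun x => min (t * l) (u x) + w x) x ∂μ) <
        max (∫ x, normF w x ∂μ) (∫ x, normF (fun x => u x + w x) x ∂μ) := by
  intro t ht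
  obtain ⟨ht0, ht1⟩ := ht
  set f := fun x => min (t * l) (u x) + w x with hf_def
  have hfc : Continuous f := (continuous_const.min hu).add hw
  have hu0 : ∀ x, 0 ≤ u x := fun x => humin ▸ minF_le' hu x
  have hul : ∀ x, u x ≤ l := fun x => humax ▸ le_maxF' hu x
  have hw0 : ∀ x, 0 ≤ w x := fun x => hwmin ▸ minF_le' hw x
  have htl0 : 0 < t * l := mul_pos ht0 hl
  have htll : t * l < l := by nlinarith
  -- the functions at t = 0 and t = 1
  have e0 : (fun x => min ((0:ℝ) * l) (u x) + w x) = w := by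
    funext x; rw [zero_mul, min_eq_left (hu0 x), zero_add]
  have e1 : (fun x => min ((1:ℝ) * l) (u x) + w x) = fun x => u x + w x := by
    funext x; rw [one_mul, min_eq_right (hul x)]
  -- min of u + w
  set m1 := minF (fun x => u x + w x) with hm1_def
  have huwc : Continuous (fun x => u x + w x) := hu.add hw
  have hm1le : ∀ x, m1 ≤ u x + w x := fun x => minF_le' huwc x
  -- point where w attains its min 0
  obtain ⟨xw, hxw_eq, -⟩ := exists_minF hw
  have hxw : w xw = 0 := by rw [← hxw_eq, hwmin]
  -- point where u + w attains its min m1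
  obtain ⟨x1, hx1_eq, -⟩ := exists_minF huwc
  have hx1 : u x1 + w x1 = m1 := hx1_eq.symm
  -- point where u attains its min 0 and its max l
  obtain ⟨xu, hxu_eq, -⟩ := exists_minF hu
  have hxu : u xu = 0 := by rw [← hxu_eq, humin]
  obtain ⟨xm, hxm_eq, -⟩ := exists_maxF hu
  have hxm : u xm = l := by rw [← hxm_eq, humax]
  -- integrability
  have hint : ∀ g : X → ℝ, Continuous g → Integrable (normF g) μ := fun g hg =>
    cont_integrable' μ (hg.sub continuous_const)
  have key : (∫ x, normF f x ∂μ) <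
      max (∫ x, normF w x ∂μ) (∫ x, normF (fun x => u x + w x) x ∂μ) := by
    rcases le_or_gt (t * l) m1 with hcase | hcase
    · -- minF f = t * l, compare with w
      have hminf : minF f = t * l := by
        refine minF_eq_of (fun x => ?_) ⟨xw, ?_⟩
        · rcases le_total (t * l) (u x) with h | h
          · have := hw0 x
            simp only [hf_def, min_eq_left h]; linarith
          · simp only [hf_def, min_eq_right h]
            have := hm1le x; linarith
        · have huxw : t * l ≤ u xw := by
            have := hm1le xw; rw [hxw] at this; linarith
          simp only [hf_def, min_eq_left huxw, hxw, add_zero]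
      set D := fun x => normF w x - normF f x with hD_def
      have hDc : Continuous D :=
        (hw.sub continuous_const).sub (hfc.sub continuous_const)
      have hD0 : ∀ x, 0 ≤ D x := by
        intro x
        simp only [hD_def, normF, hminf, hwmin, hf_def, sub_zero]
        have := min_le_left (t * l) (u x)
        linarith
      have hDpos : 0 < D xu := by
        simp only [hD_def, normF, hminf, hwmin, hf_def, sub_zero, hxu]
        rw [min_eq_right (le_of_lt htl0)]
        linarith
      have hpos := integral_pos_of_full μ hfull hDc hD0 hDpos
      rw [hD_def] at hpos
      rw [integral_sub (hint w hw) (hint f hfc)] at hpos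
      exact lt_max_of_lt_left (by linarith)
    · -- minF f = m1, compare with u + w
      have hminf : minF f = m1 := by
        refine minF_eq_of (fun x => ?_) ⟨x1, ?_⟩
        · rcases le_total (t * l) (u x) with h | h
          · have := hw0 x
            simp only [hf_def, min_eq_left h]; linarith
          · simp only [hf_def, min_eq_right h]
            exact hm1le x
        · have hux1 : u x1 ≤ t * l := by
            have := hw0 x1; linarith
          simp only [hf_def, min_eq_right hux1, hx1]
      set D := fun x => normF (fun x => u x + w x) x - normF f x with hD_def
      have hDc : Continuous D :=
        (huwc.sub continuous_const).sub (hfc.sub continuous_const)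
      have hD0 : ∀ x, 0 ≤ D x := by
        intro x
        simp only [hD_def, normF, hminf, hf_def, ← hm1_def]
        have := min_le_right (t * l) (u x)
        linarith
      have hDpos : 0 < D xm := by
        simp only [hD_def, normF, hminf, hf_def, ← hm1_def, hxm]
        rw [min_eq_left (le_of_lt htll)]
        linarith
      have hpos := integral_pos_of_full μ hfull hDc hD0 hDpos
      rw [hD_def] at hpos
      rw [integral_sub (hint _ huwc) (hint f hfc)] at hpos
      exact lt_max_of_lt_right (by linarith)
  refine ⟨?_, key⟩
  rw [e0, e1]
  exact key
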